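/- If f : [a,b] → ℝ₊ is continuous and quasi-concave, then U_n^{(M)}(f;[a,b]) is quasi-concave on [a,b] for every n ≥ 2. -/

import Mathlib

open Finset Set

/-- Basis functions of the truncated Baskakov operator on `[0,1]`:
`b_{n,k}(x) = C(n+k-1,k) x^k (1+x)^{-(n+k)}`. -/
noncomputable def bk (n k : ℕ) (x : ℝ) : ℝ :=
  (Nat.choose (n + k - 1) k : ℝ) * x ^ k / (1 + x) ^ (n + k)

/-- Max-product truncated Baskakov operator on `[0,1]`. -/
noncomputable def UM (n : ℕ) (f : ℝ → ℝ) (x : ℝ) : ℝ :=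
  ((range (n + 1)).sup' nonempty_range_add_one fun k => bk n k x * f ((k : ℝ) / n)) /
  ((range (n + 1)).sup' nonempty_range_add_one fun k => bk n k x)

/-- Basis functions on a general compact interval `[a,b]`. -/
noncomputable def bkab (a b : ℝ) (n k : ℕ) (x : ℝ) : ℝ :=
  (Nat.choose (n + k - 1) k : ℝ) * ((x - a) / (b - a)) ^ k /
    ((b - 2 * a + x) / (b - a)) ^ (n + k)

/-- Max-product truncated Baskakov operator on `[a,b]`. -/
noncomputable def UMab (a b : ℝ) (n : ℕ) (f : ℝ → ℝ) (x : ℝ) : ℝ :=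
  ((range (n + 1)).sup' nonempty_range_add_one fun k =>
      bkab a b n k x * f (a + (b - a) * k / n)) /
  ((range (n + 1)).sup' nonempty_range_add_one fun k => bkab a b n k x)

/-- Modulus of continuity `ω₁(f;δ)` of `f` on a set `s`. -/
noncomputable def omega1 (f : ℝ → ℝ) (s : Set ℝ) (δ : ℝ) : ℝ :=
  sSup {d | ∃ x ∈ s, ∃ y ∈ s, |x - y| ≤ δ ∧ d = |f x - f y|}

lemma bk_nonneg (n k : ℕ) {x : ℝ} (hx : 0 ≤ x) : 0 ≤ bk n k x := by
  unfold bk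
  apply div_nonneg (mul_nonneg (by positivity) (pow_nonneg hx k)) (pow_nonneg (by linarith) _)

lemma bk_zero_pos (n : ℕ) {x : ℝ} (hx : 0 ≤ x) : 0 < bk n 0 x := by
  unfold bk
  simp only [Nat.add_zero, Nat.choose_zero_right, Nat.cast_one, pow_zero, mul_one, one_mul]
  positivity

lemma bk_eq' (n k : ℕ) {x : ℝ} (hx : 0 ≤ x) :
    bk n k x = (Nat.choose (n + k - 1) k : ℝ) * (x / (1 + x)) ^ k * (1 / (1 + x)) ^ n := by
  have h1 : (0:ℝ) < 1 + x := by linarith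
  unfold bk
  rw [div_pow, div_pow, one_pow, pow_add, div_eq_iff (by positivity : ((1+x)^n * (1+x)^k : ℝ) ≠ 0)]
  have h2 : (1:ℝ)/(1+x)^n * ((1+x)^n*(1+x)^k) = (1+x)^k := by field_simp
  rw [mul_assoc, mul_assoc, h2, ← mul_assoc, mul_assoc _ _ ((1+x)^k),
    div_mul_cancel₀ _ (pow_ne_zero _ h1.ne')]

lemma choose_id (n k : ℕ) (hn : 1 ≤ n) :
    (n + k) * Nat.choose (n + k - 1) k = Nat.choose (n + k) (k + 1) * (k + 1) := by
  have h := Nat.add_one_mul_choose_eq (n + k - 1) k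
  rwa [show n + k - 1 + 1 = n + k from by omega] at h

lemma bk_succ_le (n k : ℕ) (hn : 2 ≤ n) {x : ℝ} (hx : 0 ≤ x)
    (h : x * ((n : ℝ) - 1) ≤ (k : ℝ) + 1) : bk n (k + 1) x ≤ bk n k x := by
  have h1 : (0:ℝ) < 1 + x := by linarith
  unfold bk
  rw [show n + (k + 1) - 1 = n + k from by omega, show n + (k + 1) = (n + k) + 1 from by omega]
  rw [div_le_div_iff₀ (by positivity) (by positivity)]
  set c1 := (Nat.choose (n + k - 1) k : ℝ) with hc1
  set c2 := (Nat.choose (n + k) (k + 1) : ℝ) with hc2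
  have c1pos : 0 < c1 := by
    rw [hc1]; exact_mod_cast Nat.choose_pos (by omega)
  have key : c2 * ((k : ℝ) + 1) = ((n : ℝ) + (k : ℝ)) * c1 := by
    rw [hc1, hc2]; exact_mod_cast (choose_id n k (by omega)).symm
  have hmul : c2 * x ≤ c1 * (1 + x) := by
    have hk1 : (0:ℝ) < (k : ℝ) + 1 := by positivity
    rw [← mul_le_mul_iff_of_pos_right hk1]
    have keyx : c2 * ((k : ℝ) + 1) * x = ((n : ℝ) + (k : ℝ)) * c1 * x := by rw [key]
    have hc1h : c1 * (x * ((n:ℝ) - 1)) ≤ c1 * ((k:ℝ) + 1) :=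
      mul_le_mul_of_nonneg_left h c1pos.le
    nlinarith [keyx, hc1h]
  calc c2 * x ^ (k + 1) * (1 + x) ^ (n + k)
      = (c2 * x) * (x ^ k * (1 + x) ^ (n + k)) := by ring
    _ ≤ (c1 * (1 + x)) * (x ^ k * (1 + x) ^ (n + k)) :=
        mul_le_mul_of_nonneg_right hmul (by positivity)
    _ = c1 * x ^ k * (1 + x) ^ ((n + k) + 1) := by ring

lemma bk_le_succ (n k : ℕ) (hn : 2 ≤ n) {x : ℝ} (hx : 0 ≤ x)
    (h : (k : ℝ) + 1 ≤ x * ((n : ℝ) - 1)) : bk n k x ≤ bk n (k + 1) x := by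
  have h1 : (0:ℝ) < 1 + x := by linarith
  unfold bk
  rw [show n + (k + 1) - 1 = n + k from by omega, show n + (k + 1) = (n + k) + 1 from by omega]
  rw [div_le_div_iff₀ (by positivity) (by positivity)]
  set c1 := (Nat.choose (n + k - 1) k : ℝ) with hc1
  set c2 := (Nat.choose (n + k) (k + 1) : ℝ) with hc2
  have c1pos : 0 < c1 := by
    rw [hc1]; exact_mod_cast Nat.choose_pos (by omega)
  have key : c2 * ((k : ℝ) + 1) = ((n : ℝ) + (k : ℝ)) * c1 := by
    rw [hc1, hc2]; exact_mod_cast (choose_id n k (by omega)).symm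
  have hmul : c1 * (1 + x) ≤ c2 * x := by
    have hk1 : (0:ℝ) < (k : ℝ) + 1 := by positivity
    rw [← mul_le_mul_iff_of_pos_right hk1]
    have keyx : c2 * ((k : ℝ) + 1) * x = ((n : ℝ) + (k : ℝ)) * c1 * x := by rw [key]
    have hc1h : c1 * ((k:ℝ) + 1) ≤ c1 * (x * ((n:ℝ) - 1)) :=
      mul_le_mul_of_nonneg_left h c1pos.le
    nlinarith [keyx, hc1h]
  calc c1 * x ^ k * (1 + x) ^ ((n + k) + 1)
      = (c1 * (1 + x)) * (x ^ k * (1 + x) ^ (n + k)) := by ring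
    _ ≤ (c2 * x) * (x ^ k * (1 + x) ^ (n + k)) :=
        mul_le_mul_of_nonneg_right hmul (by positivity)
    _ = c2 * x ^ (k + 1) * (1 + x) ^ (n + k) := by ring

lemma bk_mono_below (n : ℕ) (hn : 2 ≤ n) {k j : ℕ} (hkj : k ≤ j) {x : ℝ} (hx : 0 ≤ x)
    (hxj : (j : ℝ) ≤ x * ((n : ℝ) - 1)) : bk n k x ≤ bk n j x := by
  induction j, hkj using Nat.le_induction with
  | base => exact le_refl _
  | succ j hj ih =>
    have hj' : (j : ℝ) ≤ x * ((n : ℝ) - 1) := by push_cast at hxj ⊢; linarith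
    exact le_trans (ih hj') (bk_le_succ n j hn hx (by push_cast at hxj ⊢; linarith))

lemma bk_mono_above (n : ℕ) (hn : 2 ≤ n) {j k : ℕ} (hjk : j ≤ k) {x : ℝ} (hx : 0 ≤ x)
    (hxj : x * ((n : ℝ) - 1) ≤ (j : ℝ) + 1) : bk n k x ≤ bk n j x := by
  induction k, hjk using Nat.le_induction with
  | base => exact le_refl _
  | succ k hk ih =>
    exact le_trans (bk_succ_le n k hn hx (by
      have : (j:ℝ) ≤ (k:ℝ) := by exact_mod_cast hk
      linarith)) ih

lemma bk_peak (n : ℕ) (hn : 2 ≤ n) (j k : ℕ) {x : ℝ} (hx : 0 ≤ x)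
    (h1 : (j : ℝ) ≤ x * ((n : ℝ) - 1)) (h2 : x * ((n : ℝ) - 1) ≤ (j : ℝ) + 1) :
    bk n k x ≤ bk n j x := by
  rcases le_total k j with h | h
  · exact bk_mono_below n hn h hx h1
  · exact bk_mono_above n hn h hx h2

lemma bk_cross (n : ℕ) {j k : ℕ} (hjk : j ≤ k) {x y : ℝ} (hx : 0 ≤ x) (hxy : x ≤ y) :
    bk n k x * bk n j y ≤ bk n k y * bk n j x := by
  have hy : 0 ≤ y := le_trans hx hxy
  have h1x : (0:ℝ) < 1 + x := by linarith
  have h1y : (0:ℝ) < 1 + y := by linarith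
  obtain ⟨d, rfl⟩ := Nat.exists_eq_add_of_le hjk
  rw [bk_eq' n (j+d) hx, bk_eq' n j hy, bk_eq' n (j+d) hy, bk_eq' n j hx]
  have hs : x / (1 + x) ≤ y / (1 + y) := by
    rw [div_le_div_iff₀ h1x h1y]; nlinarith
  have hsx : 0 ≤ x / (1 + x) := by positivity
  have hsy : 0 ≤ y / (1 + y) := by positivity
  have key : (x/(1+x)) ^ (j+d) * (y/(1+y)) ^ j ≤ (y/(1+y)) ^ (j+d) * (x/(1+x)) ^ j := by
    rw [pow_add, pow_add]
    calc (x/(1+x))^j * (x/(1+x))^d * (y/(1+y))^j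
        = ((x/(1+x))^j * (y/(1+y))^j) * (x/(1+x))^d := by ring
      _ ≤ ((x/(1+x))^j * (y/(1+y))^j) * (y/(1+y))^d := by
          apply mul_le_mul_of_nonneg_left (pow_le_pow_left₀ hsx hs d) (by positivity)
      _ = (y/(1+y))^j * (y/(1+y))^d * (x/(1+x))^j := by ring
  calc (Nat.choose (n+(j+d)-1) (j+d) : ℝ) * (x/(1+x))^(j+d) * (1/(1+x))^n *
        ((Nat.choose (n+j-1) j : ℝ) * (y/(1+y))^j * (1/(1+y))^n)
      = ((x/(1+x))^(j+d) * (y/(1+y))^j) *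
        ((Nat.choose (n+(j+d)-1) (j+d) : ℝ) * (Nat.choose (n+j-1) j : ℝ) *
          ((1/(1+x))^n * (1/(1+y))^n)) := by ring
    _ ≤ ((y/(1+y))^(j+d) * (x/(1+x))^j) *
        ((Nat.choose (n+(j+d)-1) (j+d) : ℝ) * (Nat.choose (n+j-1) j : ℝ) *
          ((1/(1+x))^n * (1/(1+y))^n)) := by
        apply mul_le_mul_of_nonneg_right key (by positivity)
    _ = (Nat.choose (n+(j+d)-1) (j+d) : ℝ) * (y/(1+y))^(j+d) * (1/(1+y))^n *
        ((Nat.choose (n+j-1) j : ℝ) * (x/(1+x))^j * (1/(1+x))^n) := by ring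

lemma UM_mono (n : ℕ) (hn : 2 ≤ n) (g : ℝ → ℝ) (j : ℕ) (hj : j + 1 < n)
    (hg : ∀ k, k ≤ n → 0 ≤ g ((k : ℝ) / n))
    (hmono : ∀ k, k ≤ j → g ((k : ℝ) / n) ≤ g ((j : ℝ) / n)) :
    MonotoneOn (UM n g) (Icc ((j : ℝ) / ((n : ℝ) - 1)) (((j : ℝ) + 1) / ((n : ℝ) - 1))) := by
  have hn1 : (0:ℝ) < (n:ℝ) - 1 := by
    have : (2:ℝ) ≤ (n:ℝ) := by exact_mod_cast hn
    linarith
  intro x hx y hy hxy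
  have hx0 : 0 ≤ x := le_trans (by positivity) hx.1
  have hy0 : 0 ≤ y := le_trans hx0 hxy
  have hxl : (j:ℝ) ≤ x * ((n:ℝ)-1) := by
    have := hx.1; rw [div_le_iff₀ hn1] at this; linarith
  have hxu : x * ((n:ℝ)-1) ≤ (j:ℝ)+1 := by
    have := hx.2; rw [le_div_iff₀ hn1] at this; linarith
  have hyl : (j:ℝ) ≤ y * ((n:ℝ)-1) := by
    have := hy.1; rw [div_le_iff₀ hn1] at this; linarith
  have hyu : y * ((n:ℝ)-1) ≤ (j:ℝ)+1 := by
    have := hy.2; rw [le_div_iff₀ hn1] at this; linarith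
  have hjmem : j ∈ range (n+1) := mem_range.mpr (by omega)
  have hDx : ((range (n+1)).sup' nonempty_range_add_one fun k => bk n k x) = bk n j x :=
    le_antisymm (Finset.sup'_le _ _ fun k _ => bk_peak n hn j k hx0 hxl hxu)
      (Finset.le_sup' (fun k => bk n k x) hjmem)
  have hDy : ((range (n+1)).sup' nonempty_range_add_one fun k => bk n k y) = bk n j y :=
    le_antisymm (Finset.sup'_le _ _ fun k _ => bk_peak n hn j k hy0 hyl hyu)
      (Finset.le_sup' (fun k => bk n k y) hjmem)
  have hbjx : 0 < bk n j x := by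
    have h0 := Finset.le_sup' (fun k => bk n k x) (mem_range.mpr (by omega : 0 < n+1))
    rw [hDx] at h0
    exact lt_of_lt_of_le (bk_zero_pos n hx0) h0
  have hbjy : 0 < bk n j y := by
    have h0 := Finset.le_sup' (fun k => bk n k y) (mem_range.mpr (by omega : 0 < n+1))
    rw [hDy] at h0
    exact lt_of_lt_of_le (bk_zero_pos n hy0) h0
  show UM n g x ≤ UM n g y
  unfold UM
  rw [hDx, hDy, div_le_div_iff₀ hbjx hbjy, ← le_div_iff₀ hbjy]
  apply Finset.sup'_le
  intro k hk
  rw [le_div_iff₀ hbjy]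
  have hkn : k ≤ n := by have := mem_range.mp hk; omega
  rcases le_total k j with hkj | hjk
  · calc bk n k x * g ((k:ℝ)/(n:ℝ)) * bk n j y
        ≤ bk n j x * g ((j:ℝ)/(n:ℝ)) * bk n j y := by
          apply mul_le_mul_of_nonneg_right _ (bk_nonneg n j hy0)
          exact mul_le_mul (bk_mono_below n hn hkj hx0 hxl) (hmono k hkj) (hg k hkn)
            (bk_nonneg n j hx0)
      _ = (bk n j y * g ((j:ℝ)/(n:ℝ))) * bk n j x := by ring
      _ ≤ ((range (n+1)).sup' nonempty_range_add_one fun i => bk n i y * g ((i:ℝ)/(n:ℝ)))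
            * bk n j x :=
          mul_le_mul_of_nonneg_right (Finset.le_sup' (fun i => bk n i y * g ((i:ℝ)/(n:ℝ))) hjmem) (bk_nonneg n j hx0)
  · calc bk n k x * g ((k:ℝ)/(n:ℝ)) * bk n j y
        = (bk n k x * bk n j y) * g ((k:ℝ)/(n:ℝ)) := by ring
      _ ≤ (bk n k y * bk n j x) * g ((k:ℝ)/(n:ℝ)) :=
          mul_le_mul_of_nonneg_right (bk_cross n hjk hx0 hxy) (hg k hkn)
      _ = (bk n k y * g ((k:ℝ)/(n:ℝ))) * bk n j x := by ring
      _ ≤ ((range (n+1)).sup' nonempty_range_add_one fun i => bk n i y * g ((i:ℝ)/(n:ℝ)))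
            * bk n j x :=
          mul_le_mul_of_nonneg_right (Finset.le_sup' (fun i => bk n i y * g ((i:ℝ)/(n:ℝ))) hk) (bk_nonneg n j hx0)

lemma UM_anti (n : ℕ) (hn : 2 ≤ n) (g : ℝ → ℝ) (j : ℕ) (hj : j + 1 < n)
    (hg : ∀ k, k ≤ n → 0 ≤ g ((k : ℝ) / n))
    (hanti : ∀ k, j ≤ k → k ≤ n → g ((k : ℝ) / n) ≤ g ((j : ℝ) / n)) :
    AntitoneOn (UM n g) (Icc ((j : ℝ) / ((n : ℝ) - 1)) (((j : ℝ) + 1) / ((n : ℝ) - 1))) := by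
  have hn1 : (0:ℝ) < (n:ℝ) - 1 := by
    have : (2:ℝ) ≤ (n:ℝ) := by exact_mod_cast hn
    linarith
  intro x hx y hy hxy
  have hx0 : 0 ≤ x := le_trans (by positivity) hx.1
  have hy0 : 0 ≤ y := le_trans hx0 hxy
  have hxl : (j:ℝ) ≤ x * ((n:ℝ)-1) := by
    have := hx.1; rw [div_le_iff₀ hn1] at this; linarith
  have hxu : x * ((n:ℝ)-1) ≤ (j:ℝ)+1 := by
    have := hx.2; rw [le_div_iff₀ hn1] at this; linarith
  have hyl : (j:ℝ) ≤ y * ((n:ℝ)-1) := by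
    have := hy.1; rw [div_le_iff₀ hn1] at this; linarith
  have hyu : y * ((n:ℝ)-1) ≤ (j:ℝ)+1 := by
    have := hy.2; rw [le_div_iff₀ hn1] at this; linarith
  have hjmem : j ∈ range (n+1) := mem_range.mpr (by omega)
  have hDx : ((range (n+1)).sup' nonempty_range_add_one fun k => bk n k x) = bk n j x :=
    le_antisymm (Finset.sup'_le _ _ fun k _ => bk_peak n hn j k hx0 hxl hxu)
      (Finset.le_sup' (fun k => bk n k x) hjmem)
  have hDy : ((range (n+1)).sup' nonempty_range_add_one fun k => bk n k y) = bk n j y :=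
    le_antisymm (Finset.sup'_le _ _ fun k _ => bk_peak n hn j k hy0 hyl hyu)
      (Finset.le_sup' (fun k => bk n k y) hjmem)
  have hbjx : 0 < bk n j x := by
    have h0 := Finset.le_sup' (fun k => bk n k x) (mem_range.mpr (by omega : 0 < n+1))
    rw [hDx] at h0
    exact lt_of_lt_of_le (bk_zero_pos n hx0) h0
  have hbjy : 0 < bk n j y := by
    have h0 := Finset.le_sup' (fun k => bk n k y) (mem_range.mpr (by omega : 0 < n+1))
    rw [hDy] at h0
    exact lt_of_lt_of_le (bk_zero_pos n hy0) h0
  show UM n g y ≤ UM n g x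
  unfold UM
  rw [hDx, hDy, div_le_div_iff₀ hbjy hbjx, ← le_div_iff₀ hbjx]
  apply Finset.sup'_le
  intro k hk
  rw [le_div_iff₀ hbjx]
  have hkn : k ≤ n := by have := mem_range.mp hk; omega
  rcases le_total j k with hjk | hkj
  · calc bk n k y * g ((k:ℝ)/(n:ℝ)) * bk n j x
        ≤ bk n j y * g ((j:ℝ)/(n:ℝ)) * bk n j x := by
          apply mul_le_mul_of_nonneg_right _ (bk_nonneg n j hx0)
          exact mul_le_mul (bk_mono_above n hn hjk hy0 hyu) (hanti k hjk hkn) (hg k hkn)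
            (bk_nonneg n j hy0)
      _ = (bk n j x * g ((j:ℝ)/(n:ℝ))) * bk n j y := by ring
      _ ≤ ((range (n+1)).sup' nonempty_range_add_one fun i => bk n i x * g ((i:ℝ)/(n:ℝ)))
            * bk n j y :=
          mul_le_mul_of_nonneg_right (Finset.le_sup' (fun i => bk n i x * g ((i:ℝ)/(n:ℝ))) hjmem) (bk_nonneg n j hy0)
  · have hc := bk_cross n hkj hx0 hxy
    -- hc : bk n j x * bk n k y ≤ bk n j y * bk n k x
    calc bk n k y * g ((k:ℝ)/(n:ℝ)) * bk n j x
        = (bk n j x * bk n k y) * g ((k:ℝ)/(n:ℝ)) := by ring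
      _ ≤ (bk n j y * bk n k x) * g ((k:ℝ)/(n:ℝ)) :=
          mul_le_mul_of_nonneg_right hc (hg k hkn)
      _ = (bk n k x * g ((k:ℝ)/(n:ℝ))) * bk n j y := by ring
      _ ≤ ((range (n+1)).sup' nonempty_range_add_one fun i => bk n i x * g ((i:ℝ)/(n:ℝ)))
            * bk n j y :=
          mul_le_mul_of_nonneg_right (Finset.le_sup' (fun i => bk n i x * g ((i:ℝ)/(n:ℝ))) hk) (bk_nonneg n j hy0)

lemma monotoneOn_glue {f : ℝ → ℝ} {u v w : ℝ} (huv : u ≤ v) (hvw : v ≤ w)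
    (h1 : MonotoneOn f (Icc u v)) (h2 : MonotoneOn f (Icc v w)) :
    MonotoneOn f (Icc u w) := by
  intro x hx y hy hxy
  rcases le_total y v with h | h
  · exact h1 ⟨hx.1, hxy.trans h⟩ ⟨hy.1, h⟩ hxy
  · rcases le_total x v with h' | h'
    · exact (h1 ⟨hx.1, h'⟩ ⟨huv, le_refl v⟩ h').trans
        (h2 ⟨le_refl v, hvw⟩ ⟨h, hy.2⟩ h)
    · exact h2 ⟨h', hx.2⟩ ⟨h'.trans hxy, hy.2⟩ hxy

lemma antitoneOn_glue {f : ℝ → ℝ} {u v w : ℝ} (huv : u ≤ v) (hvw : v ≤ w)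
    (h1 : AntitoneOn f (Icc u v)) (h2 : AntitoneOn f (Icc v w)) :
    AntitoneOn f (Icc u w) := by
  intro x hx y hy hxy
  rcases le_total y v with h | h
  · exact h1 ⟨hx.1, hxy.trans h⟩ ⟨hy.1, h⟩ hxy
  · rcases le_total x v with h' | h'
    · exact (h2 ⟨le_refl v, hvw⟩ ⟨h, hy.2⟩ h).trans (h1 ⟨hx.1, h'⟩ ⟨huv, le_refl v⟩ h')
    · exact h2 ⟨h', hx.2⟩ ⟨h'.trans hxy, hy.2⟩ hxy

theorem UM_qc (n : ℕ) (hn : 2 ≤ n) (g : ℝ → ℝ)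
    (hg0 : ∀ t ∈ Icc (0:ℝ) 1, 0 ≤ g t)
    (hqc : QuasiconcaveOn ℝ (Icc (0:ℝ) 1) g) :
    QuasiconcaveOn ℝ (Icc (0:ℝ) 1) (UM n g) := by
  have hn1 : (0:ℝ) < (n:ℝ) - 1 := by
    have : (2:ℝ) ≤ (n:ℝ) := by exact_mod_cast hn
    linarith
  have hnn : (0:ℝ) < (n:ℝ) := by linarith
  have hnode : ∀ k, k ≤ n → ((k:ℝ)/(n:ℝ)) ∈ Icc (0:ℝ) 1 := by
    intro k hk
    constructor
    · positivity
    · rw [div_le_one hnn]; exact_mod_cast hk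
  have hg : ∀ k, k ≤ n → 0 ≤ g ((k : ℝ) / n) := fun k hk => hg0 _ (hnode k hk)
  -- grid argmax
  obtain ⟨m, hm_mem, hm⟩ := Finset.exists_max_image (range (n+1))
    (fun k => g ((k : ℝ) / n)) nonempty_range_add_one
  have hmn : m ≤ n := by have := mem_range.mp hm_mem; omega
  -- grid unimodality
  have grid_mono : ∀ k k', k ≤ k' → k' ≤ m → g ((k:ℝ)/n) ≤ g ((k':ℝ)/n) := by
    intro k k' hkk' hk'm
    have hkm : k ≤ m := hkk'.trans hk'm
    have hS := (hqc (g ((k:ℝ)/n))).ordConnected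
    have h1 : (k:ℝ)/n ∈ {x ∈ Icc (0:ℝ) 1 | g ((k:ℝ)/n) ≤ g x} :=
      ⟨hnode k (hkm.trans hmn), le_refl _⟩
    have h2 : (m:ℝ)/n ∈ {x ∈ Icc (0:ℝ) 1 | g ((k:ℝ)/n) ≤ g x} :=
      ⟨hnode m hmn, hm k (mem_range.mpr (by omega))⟩
    have h3 : (k':ℝ)/n ∈ Icc ((k:ℝ)/n) ((m:ℝ)/n) :=
      ⟨by gcongr, by gcongr⟩
    exact (hS.out h1 h2 h3).2
  have grid_anti : ∀ k k', m ≤ k → k ≤ k' → k' ≤ n → g ((k':ℝ)/n) ≤ g ((k:ℝ)/n) := by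
    intro k k' hmk hkk' hk'n
    have hS := (hqc (g ((k':ℝ)/n))).ordConnected
    have h1 : (m:ℝ)/n ∈ {x ∈ Icc (0:ℝ) 1 | g ((k':ℝ)/n) ≤ g x} :=
      ⟨hnode m hmn, hm k' (mem_range.mpr (by omega))⟩
    have h2 : (k':ℝ)/n ∈ {x ∈ Icc (0:ℝ) 1 | g ((k':ℝ)/n) ≤ g x} :=
      ⟨hnode k' hk'n, le_refl _⟩
    have h3 : (k:ℝ)/n ∈ Icc ((m:ℝ)/n) ((k':ℝ)/n) := ⟨by gcongr, by gcongr⟩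
    exact (hS.out h1 h2 h3).2
  set j0 := min m (n - 1) with hj0
  have hj0n : j0 ≤ n - 1 := min_le_right _ _
  have hj0r : ((j0:ℝ)) ≤ (n:ℝ) - 1 := by
    have : (j0:ℝ) ≤ ((n-1:ℕ):ℝ) := by exact_mod_cast hj0n
    have h2 : ((n-1:ℕ):ℝ) = (n:ℝ) - 1 := by
      push_cast [Nat.cast_sub (by omega : 1 ≤ n)]; ring
    linarith
  set p := (j0:ℝ) / ((n:ℝ) - 1) with hp
  have hp0 : 0 ≤ p := by positivity
  have hp1 : p ≤ 1 := by rw [hp, div_le_one hn1]; linarith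
  -- monotone part
  have hmonoP : MonotoneOn (UM n g) (Icc 0 p) := by
    have claim : ∀ J, J ≤ j0 → MonotoneOn (UM n g) (Icc 0 ((J:ℝ)/((n:ℝ)-1))) := by
      intro J
      induction J with
      | zero =>
        intro _
        simp only [Nat.cast_zero, zero_div]
        intro x hx y hy _
        have : x = y := le_antisymm (hx.2.trans hy.1) (hy.2.trans hx.1)
        rw [this]
      | succ J ih =>
        intro hJ
        have hJ' : J ≤ j0 := by omega
        have hJm : J < m := by omega
        have hJn : J + 1 < n := by omega
        have h1 := ih hJ'
        have h2 := UM_mono n hn g J hJn hg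
          (fun k hk => grid_mono k J hk (by omega))
        have hcast : ((J+1:ℕ):ℝ) = (J:ℝ) + 1 := by push_cast; ring
        rw [hcast]
        exact monotoneOn_glue (by positivity) (by gcongr <;> linarith) h1 h2
    have := claim j0 (le_refl _)
    rwa [← hp] at this
  -- antitone part
  have hantiP : AntitoneOn (UM n g) (Icc p 1) := by
    have claim : ∀ d J, J + d = n - 1 → j0 ≤ J →
        AntitoneOn (UM n g) (Icc ((J:ℝ)/((n:ℝ)-1)) 1) := by
      intro d
      induction d with
      | zero =>
        intro J hJ _
        have : (J:ℝ) = (n:ℝ) - 1 := by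
          have : J = n - 1 := by omega
          rw [this]; push_cast [Nat.cast_sub (by omega : 1 ≤ n)]; ring
        rw [this, div_self hn1.ne']
        intro x hx y hy hxy
        have : x = y := le_antisymm hxy (hy.2.trans hx.1)
        rw [this]
      | succ d ih =>
        intro J hJ hj0J
        have hJn : J + 1 < n := by omega
        have hmJ : m ≤ J := by omega
        have h2 := ih (J+1) (by omega) (by omega)
        have h1 := UM_anti n hn g J hJn hg
          (fun k hk hkn => grid_anti J k hmJ hk hkn)
        have hcast : ((J+1:ℕ):ℝ) = (J:ℝ) + 1 := by push_cast; ring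
        rw [hcast] at h2
        apply antitoneOn_glue (by gcongr <;> linarith) ?_ h1 h2
        rw [div_le_one hn1]
        have : (J:ℝ) + 1 ≤ ((n-1:ℕ):ℝ) := by exact_mod_cast (by omega : J + 1 ≤ n - 1)
        have hc : ((n-1:ℕ):ℝ) = (n:ℝ) - 1 := by
          push_cast [Nat.cast_sub (by omega : 1 ≤ n)]; ring
        linarith
    have := claim (n - 1 - j0) j0 (by omega) (le_refl _)
    rwa [← hp] at this
  -- conclude quasiconcavity
  intro r
  rw [convex_iff_ordConnected]
  constructor
  intro x hx y hy z hz
  refine ⟨⟨hx.1.1.trans hz.1, hz.2.trans hy.1.2⟩, ?_⟩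
  rcases le_total z p with hzp | hpz
  · have hxmem : x ∈ Icc 0 p := ⟨hx.1.1, hz.1.trans hzp⟩
    have hzmem : z ∈ Icc 0 p := ⟨hx.1.1.trans hz.1, hzp⟩
    exact hx.2.trans (hmonoP hxmem hzmem hz.1)
  · have hzmem : z ∈ Icc p 1 := ⟨hpz, hz.2.trans hy.1.2⟩
    have hymem : y ∈ Icc p 1 := ⟨hpz.trans hz.2, hy.1.2⟩
    exact hy.2.trans (hantiP hzmem hymem hz.2)

lemma bkab_eq {a b : ℝ} (hab : a < b) (n k : ℕ) (x : ℝ) :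
    bkab a b n k x = bk n k ((x - a) / (b - a)) := by
  have hba : b - a ≠ 0 := by linarith
  have h : (b - 2 * a + x) / (b - a) = 1 + (x - a) / (b - a) := by
    field_simp; ring
  rw [bkab, bk, h]

lemma UMab_eq {a b : ℝ} (hab : a < b) (n : ℕ) (f : ℝ → ℝ) (x : ℝ) :
    UMab a b n f x = UM n (fun t => f (a + (b - a) * t)) ((x - a) / (b - a)) := by
  unfold UMab UM
  congr 1
  · apply Finset.sup'_congr _ rfl
    intro k _
    rw [bkab_eq hab, mul_div_assoc]
  · apply Finset.sup'_congr _ rfl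
    intro k _
    rw [bkab_eq hab]

theorem UMab_preserves_quasiconcavity (a b : ℝ) (hab : a < b) (n : ℕ) (hn : 2 ≤ n)
    (f : ℝ → ℝ) (hf : ContinuousOn f (Set.Icc a b))
    (hfpos : ∀ x ∈ Set.Icc a b, 0 ≤ f x)
    (hqc : QuasiconcaveOn ℝ (Set.Icc a b) f) :
    QuasiconcaveOn ℝ (Set.Icc a b) (UMab a b n f) := by
  have hba : (0:ℝ) < b - a := by linarith
  set g : ℝ → ℝ := fun t => f (a + (b - a) * t) with hgdef
  have hmem : ∀ t ∈ Icc (0:ℝ) 1, a + (b - a) * t ∈ Icc a b := by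
    intro t ht
    constructor
    · nlinarith [ht.1]
    · nlinarith [ht.2]
  have hg0 : ∀ t ∈ Icc (0:ℝ) 1, 0 ≤ g t := fun t ht => hfpos _ (hmem t ht)
  have hgqc : QuasiconcaveOn ℝ (Icc (0:ℝ) 1) g := by
    intro r
    rw [convex_iff_ordConnected]
    constructor
    intro t1 h1 t2 h2 t ht
    have hS := (hqc r).ordConnected
    have hm1 : a + (b - a) * t1 ∈ {x ∈ Icc a b | r ≤ f x} := ⟨hmem t1 h1.1, h1.2⟩
    have hm2 : a + (b - a) * t2 ∈ {x ∈ Icc a b | r ≤ f x} := ⟨hmem t2 h2.1, h2.2⟩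
    have hmid : a + (b - a) * t ∈ Icc (a + (b - a) * t1) (a + (b - a) * t2) := by
      constructor
      · nlinarith [ht.1]
      · nlinarith [ht.2]
    have := hS.out hm1 hm2 hmid
    exact ⟨⟨h1.1.1.trans ht.1, ht.2.trans h2.1.2⟩, this.2⟩
  have hUMqc := UM_qc n hn g hg0 hgqc
  intro r
  rw [convex_iff_ordConnected]
  constructor
  intro x hx y hy z hz
  have hφ : ∀ w, w ∈ Icc a b → (w - a) / (b - a) ∈ Icc (0:ℝ) 1 := by
    intro w hw
    constructor
    · apply div_nonneg (by linarith [hw.1]) hba.le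
    · rw [div_le_one hba]; linarith [hw.2]
  have hT := ((hUMqc r).ordConnected)
  have hm1 : (x - a) / (b - a) ∈ {t ∈ Icc (0:ℝ) 1 | r ≤ UM n g t} :=
    ⟨hφ x hx.1, by rw [← UMab_eq hab]; exact hx.2⟩
  have hm2 : (y - a) / (b - a) ∈ {t ∈ Icc (0:ℝ) 1 | r ≤ UM n g t} :=
    ⟨hφ y hy.1, by rw [← UMab_eq hab]; exact hy.2⟩
  have hmid : (z - a) / (b - a) ∈ Icc ((x - a) / (b - a)) ((y - a) / (b - a)) := by
    constructor
    · gcongr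
      exact hz.1
    · gcongr
      exact hz.2
  have := hT.out hm1 hm2 hmid
  refine ⟨⟨hx.1.1.trans hz.1, hz.2.trans hy.1.2⟩, ?_⟩
  rw [UMab_eq hab]
  exact this.2
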